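/- For φ₁ ≠ φ₂ in the open unit disc, the nth trigonometric moment of Z ~ EC*(φ₁, φ₂) equals [(1−|φ₂|²)(1−conj(φ₁)φ₂)φ₁^{n+1} − (1−|φ₁|²)(1−φ₁conj(φ₂))φ₂^{n+1}] / [(φ₁−φ₂)(1−|φ₁conj(φ₂)|²)]. -/

import Mathlib

open Real Complex intervalIntegral Metric

/-- The density (with respect to arc length) of the `EC*(φ₁, φ₂)` distribution on
the unit circle. -/
noncomputable def ecDensity (φ₁ φ₂ z : ℂ) : ℝ :=
  (1 / (2 * Real.pi)) *
    (‖1 - φ₁ * (starRingEnd ℂ) φ₂‖ ^ 2 /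
      (1 - ‖φ₁ * (starRingEnd ℂ) φ₂‖ ^ 2)) *
    ((1 - ‖φ₁‖ ^ 2) / ‖z - φ₁‖ ^ 2) *
    ((1 - ‖φ₂‖ ^ 2) / ‖z - φ₂‖ ^ 2)

private lemma one_sub_ne_zero_of_abs_lt' {w : ℂ} (h : ‖w‖ < 1) : (1 : ℂ) - w ≠ 0 := by
  intro h0
  have : w = 1 := by linear_combination -h0
  simp [this] at h

private lemma sq_abs_cast' (w : ℂ) : ((‖w‖ ^ 2 : ℝ) : ℂ) = w * (starRingEnd ℂ) w := by
  rw [Complex.sq_norm]; exact (Complex.mul_conj w).symm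

private lemma sq_abs_cast2 (w : ℂ) : ((‖w‖ : ℝ) : ℂ) ^ 2 = w * (starRingEnd ℂ) w := by
  rw [← Complex.ofReal_pow]; exact sq_abs_cast' w

set_option maxHeartbeats 1000000 in
/-- The `n`th trigonometric moment of `Z ~ EC*(φ₁, φ₂)` for `φ₁ ≠ φ₂` in the open unit disc. -/
theorem ecStar_trig_moment (n : ℕ) (φ₁ φ₂ : ℂ)
    (hφ₁ : ‖φ₁‖ < 1) (hφ₂ : ‖φ₂‖ < 1) (hne : φ₁ ≠ φ₂) :
    ∫ θ in (-Real.pi)..Real.pi,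
      (Complex.exp (θ * Complex.I)) ^ n *
        ((ecDensity φ₁ φ₂ (Complex.exp (θ * Complex.I)) : ℝ) : ℂ)
      = (((1 - ‖φ₂‖ ^ 2 : ℝ) : ℂ) * (1 - (starRingEnd ℂ) φ₁ * φ₂) * φ₁ ^ (n + 1)
          - ((1 - ‖φ₁‖ ^ 2 : ℝ) : ℂ) * (1 - φ₁ * (starRingEnd ℂ) φ₂) * φ₂ ^ (n + 1)) /
        ((φ₁ - φ₂) * ((1 - ‖φ₁ * (starRingEnd ℂ) φ₂‖ ^ 2 : ℝ) : ℂ)) := by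
  have habs0₁ : (0:ℝ) ≤ ‖φ₁‖ := norm_nonneg φ₁
  have habs0₂ : (0:ℝ) ≤ ‖φ₂‖ := norm_nonneg φ₂
  have habs₁₂ : ‖φ₁ * (starRingEnd ℂ) φ₂‖ < 1 := by
    rw [norm_mul, Complex.norm_conj]
    nlinarith
  have hd : ((1 - ‖φ₁ * (starRingEnd ℂ) φ₂‖ ^ 2 : ℝ) : ℂ) ≠ 0 := by
    rw [Complex.ofReal_ne_zero]
    nlinarith [norm_nonneg (φ₁ * (starRingEnd ℂ) φ₂)]
  have hb : (1 : ℂ) - φ₁ * (starRingEnd ℂ) φ₂ ≠ 0 := one_sub_ne_zero_of_abs_lt' habs₁₂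
  have hb' : (1 : ℂ) - (starRingEnd ℂ) φ₁ * φ₂ ≠ 0 := by
    apply one_sub_ne_zero_of_abs_lt'
    rw [norm_mul, Complex.norm_conj]; nlinarith
  have hsub : φ₁ - φ₂ ≠ 0 := sub_ne_zero.mpr hne
  have hπC : ((Real.pi : ℝ) : ℂ) ≠ 0 := by
    rw [Complex.ofReal_ne_zero]; exact Real.pi_ne_zero
  -- the auxiliary holomorphic function
  set h : ℂ → ℂ := fun w =>
    (((1 - ‖φ₁ * (starRingEnd ℂ) φ₂‖ ^ 2 : ℝ) : ℂ))⁻¹ *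
      ((1 - φ₁ * (starRingEnd ℂ) φ₂) * (1 - (starRingEnd ℂ) φ₁ * φ₂)) *
      (((1 - ‖φ₁‖ ^ 2 : ℝ) : ℂ) * ((1 - ‖φ₂‖ ^ 2 : ℝ) : ℂ)) *
      w ^ (n + 1) /
      ((1 - (starRingEnd ℂ) φ₁ * w) * (1 - (starRingEnd ℂ) φ₂ * w)) with hh
  -- nonvanishing of the denominator of h on the closed disc
  have hden : ∀ w : ℂ, ‖w‖ ≤ 1 →
      (1 - (starRingEnd ℂ) φ₁ * w) * (1 - (starRingEnd ℂ) φ₂ * w) ≠ 0 := by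
    intro w hw
    apply mul_ne_zero <;> apply one_sub_ne_zero_of_abs_lt' <;>
      rw [norm_mul, Complex.norm_conj] <;> nlinarith
  -- Cauchy integral formula for each pole
  have cint : ∀ φ : ℂ, ‖φ‖ < 1 →
      (∫ θ in (0:ℝ)..2 * Real.pi, deriv (circleMap 0 1) θ •
        ((circleMap 0 1 θ - φ)⁻¹ • h (circleMap 0 1 θ)))
        = (2 * (Real.pi : ℂ) * Complex.I) • h φ := by
    intro φ hφ
    have hdiff : DiffContOnCl ℂ h (ball (0:ℂ) 1) := by
      apply DifferentiableOn.diffContOnCl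
      rw [closure_ball (0:ℂ) one_ne_zero]
      apply DifferentiableOn.div
      · fun_prop
      · fun_prop
      · intro w hw
        exact hden w (by simpa [Metric.mem_closedBall, Complex.dist_eq] using hw)
    have := hdiff.circleIntegral_sub_inv_smul
      (w := φ) (by simpa [Metric.mem_ball, Complex.dist_eq] using hφ)
    simpa [circleIntegral] using this
  -- continuity / integrability of the circle integrands
  have hcont : ∀ φ : ℂ, ‖φ‖ < 1 →
      Continuous (fun θ : ℝ => deriv (circleMap 0 1) θ •
        ((circleMap 0 1 θ - φ)⁻¹ • h (circleMap 0 1 θ))) := by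
    intro φ hφ
    have hc : Continuous (circleMap 0 1) := continuous_circleMap 0 1
    have habs : ∀ θ : ℝ, ‖circleMap 0 1 θ‖ = 1 := fun θ => by
      simpa using norm_circleMap_zero 1 θ
    have h1 : Continuous fun θ : ℝ => (circleMap 0 1 θ - φ)⁻¹ := by
      apply (hc.sub continuous_const).inv₀
      intro θ
      rw [Pi.sub_apply, sub_ne_zero]
      intro hcontr
      have h5 := habs θ
      rw [hcontr] at h5
      linarith
    have h2 : Continuous fun θ : ℝ => h (circleMap 0 1 θ) := by
      simp only [hh]
      apply Continuous.div
      · fun_prop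
      · fun_prop
      · intro θ
        exact hden _ (le_of_eq (habs θ))
    have h3 : Continuous fun θ : ℝ => deriv (circleMap 0 1) θ := by
      simp only [deriv_circleMap]
      fun_prop
    exact h3.smul (h1.smul h2)
  -- the pointwise identity on the circle
  have key : ∀ θ : ℝ,
      (Complex.exp (θ * Complex.I)) ^ n *
        ((ecDensity φ₁ φ₂ (Complex.exp (θ * Complex.I)) : ℝ) : ℂ)
      = ((2 * (Real.pi:ℂ) * Complex.I) * (φ₁ - φ₂))⁻¹ *
        ((deriv (circleMap 0 1) θ • ((circleMap 0 1 θ - φ₁)⁻¹ • h (circleMap 0 1 θ)))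
          - (deriv (circleMap 0 1) θ • ((circleMap 0 1 θ - φ₂)⁻¹ • h (circleMap 0 1 θ)))) := by
    intro θ
    have hcm : circleMap 0 1 θ = Complex.exp (θ * Complex.I) := by
      simp [circleMap]
    set z := Complex.exp (θ * Complex.I) with hz
    have hz0 : z ≠ 0 := Complex.exp_ne_zero _
    have hzabs : ‖z‖ = 1 := by
      rw [hz]; exact Complex.norm_exp_ofReal_mul_I θ
    have hzφ : ∀ φ : ℂ, ‖φ‖ < 1 → z - φ ≠ 0 := by
      intro φ hφ h0
      rw [sub_eq_zero] at h0
      rw [h0] at hzabs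
      linarith
    have hzφ₁ := hzφ φ₁ hφ₁
    have hzφ₂ := hzφ φ₂ hφ₂
    have habssq : ∀ φ : ℂ, ((‖z - φ‖ : ℝ) : ℂ) ^ 2
        = (z - φ) * (1 - (starRingEnd ℂ) φ * z) / z := by
      intro φ
      rw [sq_abs_cast2]
      have hconjz : (starRingEnd ℂ) z * z = 1 := by
        rw [hz, ← Complex.exp_conj, ← Complex.exp_add]
        simp
      rw [eq_div_iff hz0]
      simp only [map_sub]
      linear_combination (z - φ) * hconjz
    have hden₁ : (1 : ℂ) - (starRingEnd ℂ) φ₁ * z ≠ 0 :=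
      one_sub_ne_zero_of_abs_lt' (by rw [norm_mul, Complex.norm_conj, hzabs]; nlinarith)
    have hden₂ : (1 : ℂ) - (starRingEnd ℂ) φ₂ * z ≠ 0 :=
      one_sub_ne_zero_of_abs_lt' (by rw [norm_mul, Complex.norm_conj, hzabs]; nlinarith)
    have hd' : (1:ℂ) - ((‖φ₁ * (starRingEnd ℂ) φ₂‖ : ℝ) : ℂ) ^ 2 ≠ 0 := by
      have h0 := hd; push_cast at h0; exact h0
    have hconjb : (starRingEnd ℂ) (1 - φ₁ * (starRingEnd ℂ) φ₂)
        = 1 - (starRingEnd ℂ) φ₁ * φ₂ := by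
      simp [map_sub, map_mul]
    have hI : Complex.I ≠ 0 := Complex.I_ne_zero
    have hK : (2 * (Real.pi:ℂ) * Complex.I) * (φ₁ - φ₂) ≠ 0 :=
      mul_ne_zero (by simp [hπC, hI]) hsub
    have hY : ((1 - (starRingEnd ℂ) φ₁ * z) * (1 - (starRingEnd ℂ) φ₂ * z)) ≠ 0 :=
      mul_ne_zero hden₁ hden₂
    rw [hcm, deriv_circleMap, hcm]
    simp only [hh, smul_eq_mul, ecDensity]
    push_cast
    rw [sq_abs_cast2 (1 - φ₁ * (starRingEnd ℂ) φ₂), hconjb, habssq φ₁, habssq φ₂]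
    rw [pow_succ z n]
    trans ((1 - φ₁ * (starRingEnd ℂ) φ₂) * (1 - (starRingEnd ℂ) φ₁ * φ₂) *
          ((1 - ((‖φ₁‖ : ℝ):ℂ)^2) * (1 - ((‖φ₂‖ : ℝ):ℂ)^2)) * (z ^ n * z * z)) /
        (2 * (Real.pi:ℂ) * (1 - ((‖φ₁ * (starRingEnd ℂ) φ₂‖ : ℝ):ℂ)^2) *
          ((z - φ₁) * (1 - (starRingEnd ℂ) φ₁ * z)) *
          ((z - φ₂) * (1 - (starRingEnd ℂ) φ₂ * z)))
    · field_simp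
    · symm
      have hH : (1 - ((‖φ₁ * (starRingEnd ℂ) φ₂‖ : ℝ):ℂ)^2)⁻¹ *
            ((1 - φ₁ * (starRingEnd ℂ) φ₂) * (1 - (starRingEnd ℂ) φ₁ * φ₂)) *
            ((1 - ((‖φ₁‖ : ℝ):ℂ)^2) * (1 - ((‖φ₂‖ : ℝ):ℂ)^2)) * (z ^ n * z) /
            ((1 - (starRingEnd ℂ) φ₁ * z) * (1 - (starRingEnd ℂ) φ₂ * z))
          = ((1 - φ₁ * (starRingEnd ℂ) φ₂) * (1 - (starRingEnd ℂ) φ₁ * φ₂) *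
              ((1 - ((‖φ₁‖ : ℝ):ℂ)^2) * (1 - ((‖φ₂‖ : ℝ):ℂ)^2)) * (z ^ n * z)) /
            ((1 - ((‖φ₁ * (starRingEnd ℂ) φ₂‖ : ℝ):ℂ)^2) *
              ((1 - (starRingEnd ℂ) φ₁ * z) * (1 - (starRingEnd ℂ) φ₂ * z))) := by
        field_simp
      rw [hH]
      have comb : ∀ N DY : ℂ, DY ≠ 0 →
          (z * Complex.I) * ((z - φ₁)⁻¹ * (N / DY)) - (z * Complex.I) * ((z - φ₂)⁻¹ * (N / DY))
            = z * Complex.I * N * (φ₁ - φ₂) / ((z - φ₁) * (z - φ₂) * DY) := by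
        intro N DY hDY
        field_simp
        ring
      rw [comb _ _ (mul_ne_zero hd' hY)]
      rw [inv_mul_eq_div, div_div, div_eq_div_iff (by
          exact mul_ne_zero (mul_ne_zero (mul_ne_zero hzφ₁ hzφ₂) (mul_ne_zero hd' hY)) hK) (by
          refine mul_ne_zero (mul_ne_zero (mul_ne_zero (by simp [hπC]) hd') ?_) ?_ <;>
            [exact mul_ne_zero hzφ₁ hden₁; exact mul_ne_zero hzφ₂ hden₂])]
      ring
  -- periodicity: move the integral to [0, 2π]
  have per : Function.Periodic (fun θ : ℝ => (Complex.exp (θ * Complex.I)) ^ n *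
      ((ecDensity φ₁ φ₂ (Complex.exp (θ * Complex.I)) : ℝ) : ℂ)) (2 * Real.pi) := by
    intro θ
    have hexp : Complex.exp (((θ + 2 * Real.pi : ℝ) : ℂ) * Complex.I)
        = Complex.exp ((θ : ℂ) * Complex.I) := by
      push_cast
      rw [add_mul, Complex.exp_add, Complex.exp_two_pi_mul_I, mul_one]
    simp only [hexp]
  have hshift : (∫ θ in (-Real.pi)..Real.pi,
      (Complex.exp (θ * Complex.I)) ^ n *
        ((ecDensity φ₁ φ₂ (Complex.exp (θ * Complex.I)) : ℝ) : ℂ))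
      = ∫ θ in (0:ℝ)..2 * Real.pi,
      (Complex.exp (θ * Complex.I)) ^ n *
        ((ecDensity φ₁ φ₂ (Complex.exp (θ * Complex.I)) : ℝ) : ℂ) := by
    have := per.intervalIntegral_add_eq (-Real.pi) 0
    rw [show -Real.pi + 2 * Real.pi = Real.pi by ring, zero_add] at this
    exact this
  rw [hshift]
  rw [intervalIntegral.integral_congr (fun θ _ => key θ)]
  rw [intervalIntegral.integral_const_mul]
  rw [intervalIntegral.integral_sub
    ((hcont φ₁ hφ₁).intervalIntegrable _ _) ((hcont φ₂ hφ₂).intervalIntegrable _ _)]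
  rw [cint φ₁ hφ₁, cint φ₂ hφ₂]
  -- final algebra
  have hc₁ : ((1 - ‖φ₁‖ ^ 2 : ℝ) : ℂ) = 1 - (starRingEnd ℂ) φ₁ * φ₁ := by
    push_cast
    linear_combination -sq_abs_cast2 φ₁
  have hc₂ : ((1 - ‖φ₂‖ ^ 2 : ℝ) : ℂ) = 1 - (starRingEnd ℂ) φ₂ * φ₂ := by
    push_cast
    linear_combination -sq_abs_cast2 φ₂
  have hc₁0 : (1:ℂ) - (starRingEnd ℂ) φ₁ * φ₁ ≠ 0 := by
    rw [← hc₁, Complex.ofReal_ne_zero]; nlinarith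
  have hc₂0 : (1:ℂ) - (starRingEnd ℂ) φ₂ * φ₂ ≠ 0 := by
    rw [← hc₂, Complex.ofReal_ne_zero]; nlinarith
  have hb₂₁ : (1:ℂ) - (starRingEnd ℂ) φ₂ * φ₁ ≠ 0 := by
    apply one_sub_ne_zero_of_abs_lt'
    rw [norm_mul, Complex.norm_conj]; nlinarith
  have hI : Complex.I ≠ 0 := Complex.I_ne_zero
  have hval₁ : h φ₁ = ((1 - ‖φ₂‖ ^ 2 : ℝ) : ℂ) * (1 - (starRingEnd ℂ) φ₁ * φ₂) *
      φ₁ ^ (n + 1) / ((1 - ‖φ₁ * (starRingEnd ℂ) φ₂‖ ^ 2 : ℝ) : ℂ) := by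
    simp only [hh]
    rw [inv_mul_eq_div, div_mul_eq_mul_div, div_mul_eq_mul_div, div_div,
      div_eq_div_iff (mul_ne_zero hd (mul_ne_zero hc₁0 hb₂₁)) hd, hc₁]
    ring
  have hval₂ : h φ₂ = ((1 - ‖φ₁‖ ^ 2 : ℝ) : ℂ) * (1 - φ₁ * (starRingEnd ℂ) φ₂) *
      φ₂ ^ (n + 1) / ((1 - ‖φ₁ * (starRingEnd ℂ) φ₂‖ ^ 2 : ℝ) : ℂ) := by
    simp only [hh]
    rw [inv_mul_eq_div, div_mul_eq_mul_div, div_mul_eq_mul_div, div_div,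
      div_eq_div_iff (mul_ne_zero hd (mul_ne_zero hb' hc₂0)) hd, hc₂]
    ring
  rw [hval₁, hval₂]
  simp only [smul_eq_mul]
  have combf : ∀ A B D : ℂ, D ≠ 0 →
      ((2 * (Real.pi : ℂ) * Complex.I) * (φ₁ - φ₂))⁻¹ *
        ((2 * (Real.pi : ℂ) * Complex.I) * (A / D)
          - (2 * (Real.pi : ℂ) * Complex.I) * (B / D))
        = (A - B) / ((φ₁ - φ₂) * D) := by
    intro A B D hD
    have hK : (2 * (Real.pi:ℂ) * Complex.I) * (φ₁ - φ₂) ≠ 0 :=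
      mul_ne_zero (by simp [hπC, hI]) hsub
    rw [← mul_div_assoc, ← mul_div_assoc, div_sub_div_same, inv_mul_eq_div, div_div,
      div_eq_div_iff (mul_ne_zero hD hK) (mul_ne_zero hsub hD)]
    ring
  rw [combf _ _ _ hd]
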